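/- Work in the ring of formal power series in z over the field ℚ(t) of rational functions. Let H_n(e) denote the number of acyclic digraphs with vertex set {1,…,n} and exactly e edges, let Y_n(t) = ∑_e H_n(e) t^e, and let Z(z,t) = ∑_{n=0}^∞ z^n / (n!·(1+t)^{C(n,2)}), where C(n,2) = n(n−1)/2. Then ∑_{n=0}^∞ Y_n(t)·z^n / (n!·(1+t)^{C(n,2)}) = 1 / Z(−z,t), i.e., the power series ∑_{n=0}^∞ Y_n(t)·z^n/(n!·(1+t)^{C(n,2)}) is the multiplicative inverse of Z(−z,t). -/

import Mathlib

/-- An edge set `E` on vertex set `Fin n` contains a directed cycle if there are `j ≥ 2`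
distinct vertices `k 0, …, k (j-1)` with all consecutive (cyclic) pairs being edges. -/
def HasDicycle {n : ℕ} (E : Finset (Fin n × Fin n)) : Prop :=
  ∃ j : ℕ, 2 ≤ j ∧ ∃ k : ZMod j → Fin n, Function.Injective k ∧
    ∀ a : ZMod j, (k a, k (a + 1)) ∈ E

/-- An acyclic digraph on `Fin n`: a set of ordered pairs with distinct components
(no loops), containing no directed cycle. -/
def IsAcyclicDigraph {n : ℕ} (E : Finset (Fin n × Fin n)) : Prop :=
  (∀ e ∈ E, e.1 ≠ e.2) ∧ ¬ HasDicycle E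

/-- `H n e`: the number of acyclic digraphs with vertex set `{1, …, n}` and exactly
`e` edges. -/
noncomputable def acyclicDigraphCount (n e : ℕ) : ℕ :=
  Nat.card {E : Finset (Fin n × Fin n) // IsAcyclicDigraph E ∧ E.card = e}

/-- `Y n = ∑_e H_n(e) tᵉ`, the generating polynomial (as an element of `ℚ(t)`) counting
acyclic digraphs on `{1, …, n}` by number of edges.  (An acyclic digraph on `n` vertices
has at most `n²` edges, so the sum below captures all nonzero terms.) -/
noncomputable def acyclicGenPoly (n : ℕ) : RatFunc ℚ :=
  ∑ e ∈ Finset.range (n * n + 1), (acyclicDigraphCount n e : RatFunc ℚ) * RatFunc.X ^ e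

open Finset

lemma hasDicycle_mono {n : ℕ} {E E' : Finset (Fin n × Fin n)} (h : E' ⊆ E)
    (hd : HasDicycle E') : HasDicycle E := by
  obtain ⟨j, hj, k, hk, hke⟩ := hd
  exact ⟨j, hj, k, hk, fun a => h (hke a)⟩

lemma subgraph_acyclic {n : ℕ} {E E' : Finset (Fin n × Fin n)} (h : E' ⊆ E)
    (hE : IsAcyclicDigraph E) : IsAcyclicDigraph E' :=
  ⟨fun e he => hE.1 e (h he), fun hd => hE.2 (hasDicycle_mono h hd)⟩

/-- an acyclic digraph on a nonempty vertex set has a source -/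
lemma exists_source {n : ℕ} (hn : 1 ≤ n) {E : Finset (Fin n × Fin n)}
    (hE : IsAcyclicDigraph E) : ∃ v : Fin n, ∀ e ∈ E, e.2 ≠ v := by
  by_contra hcon
  push_neg at hcon
  -- every vertex has an in-neighbour
  have hf : ∀ v : Fin n, ∃ u : Fin n, (u, v) ∈ E := by
    intro v
    obtain ⟨e, he, h2⟩ := hcon v
    exact ⟨e.1, by rwa [← h2, Prod.mk.eta]⟩
  choose f hfE using hf
  have v0 : Fin n := ⟨0, hn⟩
  obtain ⟨i, j, hij, hEq⟩ : ∃ i j : ℕ, i ≠ j ∧ f^[i] v0 = f^[j] v0 := by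
    obtain ⟨i, j, hij, h⟩ := Finite.exists_ne_map_eq_of_infinite (fun i : ℕ => f^[i] v0)
    exact ⟨i, j, hij, h⟩
  wlog hlt : i < j generalizing i j
  · exact this j i hij.symm hEq.symm (by omega)
  set x := f^[i] v0 with hx
  have hper : ∃ p, 0 < p ∧ f^[p] x = x := by
    refine ⟨j - i, by omega, ?_⟩
    rw [hx, ← Function.iterate_add_apply, show j - i + i = j by omega]
    exact hEq.symm
  set p := Nat.find hper with hp
  obtain ⟨hppos, hpx⟩ := Nat.find_spec hper
  -- period lemma
  have hmod : ∀ e : ℕ, f^[e] x = f^[e % p] x := by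
    intro e
    conv_lhs => rw [← Nat.div_add_mod e p]
    rw [Nat.add_comm, Function.iterate_add_apply, Function.iterate_mul]
    congr 1
    induction e / p with
    | zero => simp
    | succ q ih => rw [Function.iterate_succ_apply, hpx, ih]
  have hp2 : 2 ≤ p := by
    by_contra h
    have hp1 : p = 1 := by omega
    have hxx : f x = x := by
      have hpx' : f^[p] x = x := hpx
      rwa [hp1, Function.iterate_one] at hpx'
    have hmem := hfE x
    rw [hxx] at hmem
    exact hE.1 (x, x) hmem rfl
  haveI : NeZero p := ⟨by omega⟩
  refine hE.2 ⟨p, hp2, fun a => f^[(-a).val] x, ?_, ?_⟩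
  · intro a b hab
    have hab' : f^[(-a).val] x = f^[(-b).val] x := hab
    clear hab
    by_contra hne
    have hvne : (-a).val ≠ (-b).val := by
      intro h
      exact hne (neg_injective (ZMod.val_injective p h))
    wlog hlt2 : (-a).val < (-b).val generalizing a b
    · exact this hab'.symm (Ne.symm hne) hvne.symm (by omega)
    have hav : (-a).val < p := ZMod.val_lt _
    have hbv : (-b).val < p := ZMod.val_lt _
    have key : f^[p - (-b).val + (-a).val] x = x := by
      rw [Function.iterate_add_apply, hab', ← Function.iterate_add_apply,
        show p - (-b).val + (-b).val = p by omega, hpx]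
    have hlt3 : 0 < p - (-b).val + (-a).val ∧ p - (-b).val + (-a).val < p := by omega
    exact Nat.find_min hper (m := p - (-b).val + (-a).val) hlt3.2 ⟨hlt3.1, key⟩
  · intro a
    have h1 : f^[(-(a+1)).val + 1] x = f^[(-a).val] x := by
      rw [hmod ((-(a+1)).val + 1)]
      congr 1
      have : (((-(a+1)).val + 1 : ℕ) : ZMod p) = -a := by
        push_cast [ZMod.natCast_val, ZMod.cast_id]
        ring
      calc ((-(a+1)).val + 1) % p = (((-(a+1)).val + 1 : ℕ) : ZMod p).val := (ZMod.val_natCast _ _).symm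
        _ = (-a).val := by rw [this]
    have := hfE (f^[(-(a+1)).val] x)
    rwa [← Function.iterate_succ_apply' f, h1] at this

open scoped Classical in
noncomputable def AcySet (n : ℕ) : Finset (Finset (Fin n × Fin n)) :=
  Finset.univ.filter (fun E => IsAcyclicDigraph E)

lemma mem_AcySet {n : ℕ} {E : Finset (Fin n × Fin n)} : E ∈ AcySet n ↔ IsAcyclicDigraph E := by
  classical
  simp [AcySet]

open scoped Classical in
lemma count_eq (n e : ℕ) :
    acyclicDigraphCount n e = ((AcySet n).filter (fun E => E.card = e)).card := by
  rw [acyclicDigraphCount, Nat.card_eq_fintype_card, Fintype.card_subtype]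
  congr 1
  ext E
  simp [AcySet, Finset.filter_filter]

lemma genPoly_eq_sum (n : ℕ) :
    acyclicGenPoly n = ∑ E ∈ AcySet n, (RatFunc.X : RatFunc ℚ) ^ E.card := by
  classical
  rw [acyclicGenPoly,
    ← Finset.sum_fiberwise_of_maps_to (g := fun E : Finset (Fin n × Fin n) => E.card)
      (t := Finset.range (n * n + 1)) (s := AcySet n)
      (fun E _ => by
        simpa using Nat.lt_succ_of_le (le_trans (Finset.card_le_univ E) (by simp)))
      (fun E => (RatFunc.X : RatFunc ℚ) ^ E.card)]
  refine Finset.sum_congr rfl fun e he => ?_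
  rw [count_eq]
  rw [Finset.sum_congr rfl (g := fun _ => (RatFunc.X : RatFunc ℚ) ^ e)
    (fun E hE => by rw [(Finset.mem_filter.mp hE).2]),
    Finset.sum_const, nsmul_eq_mul]

section Relabel

variable {m n : ℕ} (φ : Fin m ↪ Fin n)

lemma dicycle_map_iff (E : Finset (Fin m × Fin m)) :
    HasDicycle (E.map (φ.prodMap φ)) ↔ HasDicycle E := by
  constructor
  · rintro ⟨j, hj, k', hk', hke'⟩
    have h : ∀ a : ZMod j, ∃ p ∈ E, (φ.prodMap φ) p = (k' a, k' (a + 1)) := by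
      intro a
      simpa using Finset.mem_map.mp (hke' a)
    choose p hpE hpeq using h
    have h1 : ∀ a, φ (p a).1 = k' a := by
      intro a
      have := hpeq a
      rw [Function.Embedding.coe_prodMap] at this
      exact congrArg Prod.fst this
    have h2 : ∀ a, φ (p a).2 = k' (a + 1) := by
      intro a
      have := hpeq a
      rw [Function.Embedding.coe_prodMap] at this
      exact congrArg Prod.snd this
    refine ⟨j, hj, fun a => (p a).1, ?_, ?_⟩
    · intro a b hab
      apply hk'
      rw [← h1, ← h1]
      exact congrArg φ hab
    · intro a
      have hsnd : (p a).2 = (p (a + 1)).1 := φ.injective (by rw [h1, h2])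
      have : (p a).1 = (p a).1 ∧ (p a).2 = (p (a+1)).1 := ⟨rfl, hsnd⟩
      have heq : ((p a).1, (p (a+1)).1) = p a := by
        rw [← hsnd]
      rw [heq]
      exact hpE a
  · rintro ⟨j, hj, k, hk, hke⟩
    refine ⟨j, hj, fun a => φ (k a), fun a b hab => hk (φ.injective hab), fun a => ?_⟩
    have := Finset.mem_map_of_mem (φ.prodMap φ) (hke a)
    rwa [Function.Embedding.coe_prodMap] at this

lemma acyclic_map_iff (E : Finset (Fin m × Fin m)) :
    IsAcyclicDigraph (E.map (φ.prodMap φ)) ↔ IsAcyclicDigraph E := by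
  rw [IsAcyclicDigraph, IsAcyclicDigraph, dicycle_map_iff]
  constructor
  · rintro ⟨h1, h2⟩
    refine ⟨fun e he hne => ?_, h2⟩
    have := h1 _ (Finset.mem_map_of_mem (φ.prodMap φ) he)
    rw [Function.Embedding.coe_prodMap] at this
    exact this (by obtain ⟨e1, e2⟩ := e; simp_all)
  · rintro ⟨h1, h2⟩
    refine ⟨fun e he => ?_, h2⟩
    obtain ⟨p, hpE, hpeq⟩ := Finset.mem_map.mp he
    rw [Function.Embedding.coe_prodMap] at hpeq
    subst hpeq
    exact fun h => h1 p hpE (φ.injective h)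

end Relabel

open Finset in
open scoped Classical in
lemma sum_acyclic_on {n : ℕ} (V : Finset (Fin n)) :
    ∑ E ∈ (V ×ˢ V).powerset.filter (fun E => IsAcyclicDigraph E),
        (RatFunc.X : RatFunc ℚ) ^ E.card
      = acyclicGenPoly V.card := by
  rw [genPoly_eq_sum]
  set φ : Fin V.card ↪ Fin n := (V.orderEmbOfFin rfl).toEmbedding with hφ
  have hmem : ∀ x, φ x ∈ V := fun x => Finset.orderEmbOfFin_mem V rfl x
  have hrange : Set.range ⇑(φ.prodMap φ) = ↑(V ×ˢ V) := by
    rw [Function.Embedding.coe_prodMap, Set.range_prodMap, Finset.coe_product]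
    have : Set.range ⇑φ = ↑V := Finset.range_orderEmbOfFin V rfl
    rw [this]
  have hsub : ∀ E : Finset (Fin V.card × Fin V.card), E.map (φ.prodMap φ) ⊆ V ×ˢ V := by
    intro E e he
    obtain ⟨p, _, hpe⟩ := Finset.mem_map.mp he
    rw [Function.Embedding.coe_prodMap] at hpe
    subst hpe
    exact Finset.mem_product.mpr ⟨hmem _, hmem _⟩
  have hright : ∀ E' ∈ (V ×ˢ V).powerset.filter (fun E => IsAcyclicDigraph E),
      (E'.preimage ⇑(φ.prodMap φ) (φ.prodMap φ).injective.injOn).map (φ.prodMap φ) = E' := by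
    intro E' hE'
    have hsub' : E' ⊆ V ×ˢ V := Finset.mem_powerset.mp (Finset.mem_filter.mp hE').1
    rw [Finset.map_eq_image, Finset.image_preimage]
    refine Finset.filter_true_of_mem fun e he => ?_
    rw [hrange]
    exact_mod_cast hsub' he
  refine (Finset.sum_nbij' (fun E => E.map (φ.prodMap φ))
    (fun E' => E'.preimage ⇑(φ.prodMap φ) (φ.prodMap φ).injective.injOn)
    ?_ ?_ ?_ ?_ ?_).symm
  · intro E hE
    refine Finset.mem_filter.mpr ⟨Finset.mem_powerset.mpr (hsub E), ?_⟩
    exact (acyclic_map_iff φ E).mpr (mem_AcySet.mp hE)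
  · intro E' hE'
    refine mem_AcySet.mpr ?_
    rw [← acyclic_map_iff φ, hright E' hE']
    exact (Finset.mem_filter.mp hE').2
  · intro E _
    exact Finset.preimage_map _ _
  · intro E' hE'
    exact hright E' hE'
  · intro E _
    rw [Finset.card_map]

open Finset in
open scoped Classical in
lemma sum_cond_S {n : ℕ} (S : Finset (Fin n)) :
    ∑ E ∈ Finset.univ.filter
        (fun E : Finset (Fin n × Fin n) => IsAcyclicDigraph E ∧ ∀ e ∈ E, e.2 ∉ S),
        (RatFunc.X : RatFunc ℚ) ^ E.card
      = (1 + RatFunc.X) ^ (S.card * Sᶜ.card) * acyclicGenPoly Sᶜ.card := by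
  -- step 1: bijection with pairs
  have step1 : ∑ E ∈ Finset.univ.filter
        (fun E : Finset (Fin n × Fin n) => IsAcyclicDigraph E ∧ ∀ e ∈ E, e.2 ∉ S),
        (RatFunc.X : RatFunc ℚ) ^ E.card
      = ∑ p ∈ (S ×ˢ Sᶜ).powerset ×ˢ ((Sᶜ ×ˢ Sᶜ).powerset.filter (fun E => IsAcyclicDigraph E)),
          (RatFunc.X : RatFunc ℚ) ^ (p.1.card + p.2.card) := by
    refine Finset.sum_nbij' (fun E => (E.filter (fun e => e.1 ∈ S), E.filter (fun e => e.1 ∉ S)))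
      (fun p => p.1 ∪ p.2) ?_ ?_ ?_ ?_ ?_
    · -- maps to pairs
      intro E hE
      obtain ⟨hacy, htar⟩ := (Finset.mem_filter.mp hE).2
      refine Finset.mem_product.mpr ⟨Finset.mem_powerset.mpr ?_, Finset.mem_filter.mpr
        ⟨Finset.mem_powerset.mpr ?_, subgraph_acyclic (Finset.filter_subset _ _) hacy⟩⟩
      · intro e he
        obtain ⟨heE, h1⟩ := Finset.mem_filter.mp he
        exact Finset.mem_product.mpr ⟨h1, Finset.mem_compl.mpr (htar e heE)⟩
      · intro e he
        obtain ⟨heE, h1⟩ := Finset.mem_filter.mp he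
        exact Finset.mem_product.mpr ⟨Finset.mem_compl.mpr h1, Finset.mem_compl.mpr (htar e heE)⟩
    · -- union maps back
      rintro ⟨E₁, E₂⟩ hp
      obtain ⟨h1, h2⟩ := Finset.mem_product.mp hp
      have hE₁ : E₁ ⊆ S ×ˢ Sᶜ := Finset.mem_powerset.mp h1
      have hE₂ : E₂ ⊆ Sᶜ ×ˢ Sᶜ := Finset.mem_powerset.mp (Finset.mem_filter.mp h2).1
      have hE₂acy : IsAcyclicDigraph E₂ := (Finset.mem_filter.mp h2).2
      have htar : ∀ e ∈ E₁ ∪ E₂, e.2 ∉ S := by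
        intro e he
        rcases Finset.mem_union.mp he with h | h
        · exact Finset.mem_compl.mp (Finset.mem_product.mp (hE₁ h)).2
        · exact Finset.mem_compl.mp (Finset.mem_product.mp (hE₂ h)).2
      refine Finset.mem_filter.mpr ⟨Finset.mem_univ _, ⟨⟨?_, ?_⟩, htar⟩⟩
      · -- no loops
        intro e he heq
        rcases Finset.mem_union.mp he with h | h
        · have := Finset.mem_product.mp (hE₁ h)
          exact Finset.mem_compl.mp this.2 (heq ▸ this.1)
        · exact hE₂acy.1 e h heq
      · -- no dicycle
        rintro ⟨j, hj, k, hk, hke⟩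
        have hknotS : ∀ a : ZMod j, k a ∉ S := by
          intro a
          have := htar _ (hke (a - 1))
          simpa using this
        refine hE₂acy.2 ⟨j, hj, k, hk, fun a => ?_⟩
        rcases Finset.mem_union.mp (hke a) with h | h
        · exact absurd (Finset.mem_product.mp (hE₁ h)).1 (hknotS a)
        · exact h
    · -- left inverse
      intro E hE
      exact Finset.filter_union_filter_not_eq _ E
    · -- right inverse
      rintro ⟨E₁, E₂⟩ hp
      obtain ⟨h1, h2⟩ := Finset.mem_product.mp hp
      have hE₁ : E₁ ⊆ S ×ˢ Sᶜ := Finset.mem_powerset.mp h1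
      have hE₂ : E₂ ⊆ Sᶜ ×ˢ Sᶜ := Finset.mem_powerset.mp (Finset.mem_filter.mp h2).1
      have hfst₁ : ∀ e ∈ E₁, e.1 ∈ S := fun e he => (Finset.mem_product.mp (hE₁ he)).1
      have hfst₂ : ∀ e ∈ E₂, e.1 ∉ S :=
        fun e he => Finset.mem_compl.mp (Finset.mem_product.mp (hE₂ he)).1
      have h₁ : (E₁ ∪ E₂).filter (fun e => e.1 ∈ S) = E₁ := by
        rw [Finset.filter_union, Finset.filter_true_of_mem hfst₁,
          Finset.filter_false_of_mem (fun e he h => hfst₂ e he h), Finset.union_empty]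
      have h₂ : (E₁ ∪ E₂).filter (fun e => e.1 ∉ S) = E₂ := by
        rw [Finset.filter_union, Finset.filter_false_of_mem (fun e he h => h (hfst₁ e he)),
          Finset.filter_true_of_mem hfst₂, Finset.empty_union]
      exact Prod.ext h₁ h₂
    · -- values agree
      intro E hE
      have hdisj : Disjoint (E.filter (fun e => e.1 ∈ S)) (E.filter (fun e => e.1 ∉ S)) :=
        (Finset.disjoint_filter_filter_not E E _)
      rw [← Finset.card_union_of_disjoint hdisj, Finset.filter_union_filter_not_eq]
  rw [step1, Finset.sum_product]
  have inner : ∀ E₁ : Finset (Fin n × Fin n),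
      ∑ E₂ ∈ (Sᶜ ×ˢ Sᶜ).powerset.filter (fun E => IsAcyclicDigraph E),
        (RatFunc.X : RatFunc ℚ) ^ (E₁.card + E₂.card)
      = (RatFunc.X : RatFunc ℚ) ^ E₁.card * acyclicGenPoly Sᶜ.card := by
    intro E₁
    rw [← sum_acyclic_on Sᶜ, Finset.mul_sum]
    exact Finset.sum_congr rfl fun E₂ _ => by rw [pow_add]
  rw [Finset.sum_congr rfl fun E₁ _ => inner E₁, ← Finset.sum_mul]
  congr 1
  -- binomial-type sum over powerset
  have := Finset.prod_add (fun _ : Fin n × Fin n => (RatFunc.X : RatFunc ℚ))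
    (fun _ => (1 : RatFunc ℚ)) (S ×ˢ Sᶜ)
  rw [Finset.prod_const, add_comm (RatFunc.X : RatFunc ℚ) 1] at this
  rw [← Finset.card_product S Sᶜ, this]
  exact Finset.sum_congr rfl fun E₁ _ => by rw [Finset.prod_const, Finset.prod_const_one, mul_one]

open Finset in
open scoped Classical in
lemma master (n : ℕ) (hn : 1 ≤ n) :
    ∑ j ∈ Finset.range (n + 1),
      (-1 : RatFunc ℚ) ^ j * (n.choose j : RatFunc ℚ) * ((1 + RatFunc.X) ^ (j * (n - j))
        * acyclicGenPoly (n - j)) = 0 := by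
  have key : ∑ S ∈ (Finset.univ : Finset (Fin n)).powerset,
      (-1 : RatFunc ℚ) ^ S.card *
        ∑ E ∈ Finset.univ.filter
          (fun E : Finset (Fin n × Fin n) => IsAcyclicDigraph E ∧ ∀ e ∈ E, e.2 ∉ S),
          (RatFunc.X : RatFunc ℚ) ^ E.card = 0 := by
    have hfe : ∀ S : Finset (Fin n),
        Finset.univ.filter
          (fun E : Finset (Fin n × Fin n) => IsAcyclicDigraph E ∧ ∀ e ∈ E, e.2 ∉ S)
        = (AcySet n).filter (fun E => ∀ e ∈ E, e.2 ∉ S) := by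
      intro S
      ext E
      simp [AcySet, Finset.mem_filter, and_assoc]
    calc ∑ S ∈ (Finset.univ : Finset (Fin n)).powerset,
          (-1 : RatFunc ℚ) ^ S.card *
            ∑ E ∈ Finset.univ.filter
              (fun E : Finset (Fin n × Fin n) => IsAcyclicDigraph E ∧ ∀ e ∈ E, e.2 ∉ S),
              (RatFunc.X : RatFunc ℚ) ^ E.card
        = ∑ S ∈ (Finset.univ : Finset (Fin n)).powerset, ∑ E ∈ AcySet n,
            (if ∀ e ∈ E, e.2 ∉ S then (-1 : RatFunc ℚ) ^ S.card
              * (RatFunc.X : RatFunc ℚ) ^ E.card else 0) := by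
          refine Finset.sum_congr rfl fun S _ => ?_
          rw [hfe S, Finset.sum_filter, Finset.mul_sum]
          exact Finset.sum_congr rfl fun E _ => by rw [mul_ite, mul_zero]
      _ = ∑ E ∈ AcySet n, ∑ S ∈ (Finset.univ : Finset (Fin n)).powerset,
            (if ∀ e ∈ E, e.2 ∉ S then (-1 : RatFunc ℚ) ^ S.card
              * (RatFunc.X : RatFunc ℚ) ^ E.card else 0) := Finset.sum_comm
      _ = 0 := by
          refine Finset.sum_eq_zero fun E hE => ?_
          have hpow : (Finset.univ : Finset (Fin n)).powerset.filter
              (fun S => ∀ e ∈ E, e.2 ∉ S)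
              = (Finset.univ.filter (fun v : Fin n => ∀ e ∈ E, e.2 ≠ v)).powerset := by
            ext S
            simp only [Finset.mem_filter, Finset.mem_powerset, Finset.subset_iff,
              Finset.mem_filter, Finset.mem_univ, true_and]
            constructor
            · rintro ⟨-, h⟩ v hv
              exact fun e he heq => h e he (heq ▸ hv)
            · intro h
              exact ⟨fun v _ => trivial, fun e he hmem => h hmem e he rfl⟩
          have hne : (Finset.univ.filter (fun v : Fin n => ∀ e ∈ E, e.2 ≠ v)).Nonempty := by
            obtain ⟨v, hv⟩ := exists_source hn (mem_AcySet.mp hE)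
            exact ⟨v, Finset.mem_filter.mpr ⟨Finset.mem_univ v, hv⟩⟩
          rw [← Finset.sum_filter, hpow, ← Finset.sum_mul]
          have hz : ∑ S ∈ (Finset.univ.filter (fun v : Fin n => ∀ e ∈ E, e.2 ≠ v)).powerset,
              (-1 : RatFunc ℚ) ^ S.card = 0 := by
            have := Finset.sum_powerset_neg_one_pow_card_of_nonempty hne
            calc ∑ S ∈ (Finset.univ.filter (fun v : Fin n => ∀ e ∈ E, e.2 ≠ v)).powerset,
                (-1 : RatFunc ℚ) ^ S.card
                = ((∑ S ∈ (Finset.univ.filter (fun v : Fin n => ∀ e ∈ E, e.2 ≠ v)).powerset,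
                    (-1 : ℤ) ^ S.card : ℤ) : RatFunc ℚ) := by push_cast; rfl
              _ = 0 := by rw [this]; norm_num
          rw [hz, zero_mul]
  have key2 : ∑ S ∈ (Finset.univ : Finset (Fin n)).powerset,
      (-1 : RatFunc ℚ) ^ S.card * ((1 + RatFunc.X) ^ (S.card * (n - S.card))
        * acyclicGenPoly (n - S.card)) = 0 := by
    rw [← key]
    refine Finset.sum_congr rfl fun S _ => ?_
    rw [sum_cond_S S]
    have hc : Sᶜ.card = n - S.card := by
      rw [Finset.card_compl, Fintype.card_fin]
    rw [hc]
  rw [← key2]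
  rw [Finset.sum_powerset_apply_card
    (f := fun j => (-1 : RatFunc ℚ) ^ j * ((1 + RatFunc.X) ^ (j * (n - j))
        * acyclicGenPoly (n - j)))]
  simp only [Finset.card_univ, Fintype.card_fin, nsmul_eq_mul]
  refine Finset.sum_congr rfl fun j _ => by ring

lemma genPoly_zero : acyclicGenPoly 0 = 1 := by
  have hcount : acyclicDigraphCount 0 0 = 1 := by
    rw [acyclicDigraphCount, Nat.card_eq_one_iff_unique]
    constructor
    · constructor
      rintro ⟨E, hE⟩ ⟨E', hE'⟩
      have hEe : E = ∅ := Finset.eq_empty_of_forall_notMem (fun x _ => x.1.elim0)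
      have hE'e : E' = ∅ := Finset.eq_empty_of_forall_notMem (fun x _ => x.1.elim0)
      exact Subtype.ext (hEe.trans hE'e.symm)
    · refine ⟨⟨∅, ⟨fun e he => absurd he (Finset.notMem_empty e), ?_⟩, Finset.card_empty⟩⟩
      rintro ⟨j, hj, k, hk, hke⟩
      haveI : NeZero j := ⟨by omega⟩
      exact (k 0).elim0
  simp [acyclicGenPoly, hcount]

lemma choose_two_add (k m : ℕ) : (k + m).choose 2 = k.choose 2 + m.choose 2 + k * m := by
  induction m with
  | zero => simp
  | succ m ih =>
    rw [show k + (m + 1) = (k + m) + 1 by ring, Nat.choose_succ_succ, Nat.choose_one_right, ih,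
      Nat.choose_succ_succ m 1, Nat.choose_one_right, Nat.mul_succ]
    ring

lemma one_add_X_ne_zero : (1 + RatFunc.X : RatFunc ℚ) ≠ 0 := by
  have h1 : (1 + RatFunc.X : RatFunc ℚ)
      = algebraMap (Polynomial ℚ) (RatFunc ℚ) (1 + Polynomial.X) := by
    rw [map_add, map_one, RatFunc.algebraMap_X]
  rw [h1]
  apply RatFunc.algebraMap_ne_zero
  intro h
  have := congrArg (fun p => Polynomial.coeff p 1) h
  simp [Polynomial.coeff_one] at this


/-- In the ring of formal power series in `z` over `ℚ(t)`, with
`Z(z,t) = ∑ₙ zⁿ/(n!·(1+t)^C(n,2))`, the series `∑ₙ Yₙ(t)·zⁿ/(n!·(1+t)^C(n,2))` is the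
multiplicative inverse of `Z(−z,t)`. -/
theorem acyclic_generating_function_inverse :
    (PowerSeries.mk fun n : ℕ =>
        acyclicGenPoly n / ((n.factorial : RatFunc ℚ) * (1 + RatFunc.X) ^ n.choose 2))
      * (PowerSeries.mk fun n : ℕ =>
          (-1 : RatFunc ℚ) ^ n / ((n.factorial : RatFunc ℚ) * (1 + RatFunc.X) ^ n.choose 2))
      = 1 := by
  ext n
  rw [PowerSeries.coeff_mul, PowerSeries.coeff_one,
    Finset.Nat.sum_antidiagonal_eq_sum_range_succ_mk]
  simp only [PowerSeries.coeff_mk]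
  rcases Nat.eq_zero_or_pos n with hn | hn
  · subst hn
    simp [genPoly_zero]
  · rw [if_neg (by omega)]
    have hX : (1 + RatFunc.X : RatFunc ℚ) ≠ 0 := one_add_X_ne_zero
    haveI : CharZero (RatFunc ℚ) :=
      charZero_of_injective_algebraMap (RatFunc.algebraMap_injective ℚ)
    have hfac : ∀ m : ℕ, ((m.factorial : RatFunc ℚ)) ≠ 0 := fun m =>
      Nat.cast_ne_zero.mpr (Nat.factorial_ne_zero m)
    set c : RatFunc ℚ := (n.factorial : RatFunc ℚ) * (1 + RatFunc.X) ^ n.choose 2 with hc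
    have hcne : c ≠ 0 := mul_ne_zero (hfac n) (pow_ne_zero _ hX)
    have hterm : ∀ k ∈ Finset.range (n + 1),
        acyclicGenPoly k / ((k.factorial : RatFunc ℚ) * (1 + RatFunc.X) ^ k.choose 2) *
            ((-1 : RatFunc ℚ) ^ (n - k) /
              (((n - k).factorial : RatFunc ℚ) * (1 + RatFunc.X) ^ (n - k).choose 2)) * c
          = (-1 : RatFunc ℚ) ^ (n - k) * ((n.choose (n - k)) : RatFunc ℚ) *
              ((1 + RatFunc.X) ^ ((n - k) * (n - (n - k))) * acyclicGenPoly (n - (n - k))) := by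
      intro k hk
      have hkn : k ≤ n := by
        have := Finset.mem_range.mp hk; omega
      have e1 : n - (n - k) = k := by omega
      have e3 : n.choose (n - k) = n.choose k := Nat.choose_symm hkn
      have h2 : n.choose 2 = k.choose 2 + (n - k).choose 2 + k * (n - k) := by
        have := choose_two_add k (n - k)
        rwa [show k + (n - k) = n by omega] at this
      have hfacn : ((n.factorial : RatFunc ℚ))
          = (n.choose k : RatFunc ℚ) * (k.factorial : RatFunc ℚ)
            * ((n - k).factorial : RatFunc ℚ) := by
        exact_mod_cast (congrArg (fun m : ℕ => (m : RatFunc ℚ))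
          (Nat.choose_mul_factorial_mul_factorial hkn)).symm
      rw [e1, e3, show (n - k) * k = k * (n - k) from Nat.mul_comm _ _, hc, h2,
        pow_add, pow_add, hfacn]
      have h1 := hfac k
      have h2' := hfac (n - k)
      have h3 : ((1 + RatFunc.X : RatFunc ℚ)) ^ k.choose 2 ≠ 0 := pow_ne_zero _ hX
      have h4 : ((1 + RatFunc.X : RatFunc ℚ)) ^ (n - k).choose 2 ≠ 0 := pow_ne_zero _ hX
      field_simp
    have main : (∑ k ∈ Finset.range (n + 1),
        acyclicGenPoly k / ((k.factorial : RatFunc ℚ) * (1 + RatFunc.X) ^ k.choose 2) *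
          ((-1 : RatFunc ℚ) ^ (n - k) /
            (((n - k).factorial : RatFunc ℚ) * (1 + RatFunc.X) ^ (n - k).choose 2))) * c
        = 0 := by
      rw [Finset.sum_mul, Finset.sum_congr rfl hterm]
      have hmaster := master n hn
      have hrefl := Finset.sum_range_reflect
        (fun j => (-1 : RatFunc ℚ) ^ j * (n.choose j : RatFunc ℚ) *
          ((1 + RatFunc.X) ^ (j * (n - j)) * acyclicGenPoly (n - j))) (n + 1)
      simp only [Nat.add_sub_cancel] at hrefl
      rw [hrefl, hmaster]
    exact (mul_eq_zero.mp main).resolve_right hcne
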